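/- Let 𝒯 be a pretriangulated category, A a subring of ℚ, f : X → Y a morphism of 𝒯, and X →f Y → C → X[1] a distinguished triangle on f. Then f is an A-isogeny if and only if C is an A-torsion object. In particular, for any object X and any nonzero integer n invertible in A, the cone of the morphism n • 𝟙_X : X → X is A-torsion (indeed it is killed by n²). -/

import Mathlib

open CategoryTheory Limits Pretriangulated

/-- An object `X` is `A`-torsion if `n • 𝟙 X = 0` for some nonzero integer `n`
invertible in `A`. -/
def IsATorsion (A : Subring ℚ) {C : Type*} [Category C] [Preadditive C] (X : C) : Prop :=
  ∃ n : ℤ, n ≠ 0 ∧ IsUnit (n : A) ∧ (n : ℤ) • 𝟙 X = 0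

/-- `f : X ⟶ Y` is an `A`-isogeny if there are `g : Y ⟶ X` and a nonzero integer `n`
invertible in `A` with `f ≫ g = n • 𝟙 X` and `g ≫ f = n • 𝟙 Y`. -/
def IsAIsogeny (A : Subring ℚ) {C : Type*} [Category C] [Preadditive C]
    {X Y : C} (f : X ⟶ Y) : Prop :=
  ∃ (g : Y ⟶ X) (n : ℤ), n ≠ 0 ∧ IsUnit (n : A) ∧
    f ≫ g = (n : ℤ) • 𝟙 X ∧ g ≫ f = (n : ℤ) • 𝟙 Y

section Aux

variable {C : Type*} [Category C] [HasZeroObject C] [Preadditive C] [HasShift C ℤ]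
  [∀ n : ℤ, (CategoryTheory.shiftFunctor C n).Additive] [Pretriangulated C]

/-- If `f` is annihilated by composition on both sides by multiples of `n`, the cone is
killed by `n²`. -/
lemma isogeny_cone_killed {X Y Z : C} (f : X ⟶ Y) (g : Y ⟶ Z) (h : Z ⟶ X⟦(1 : ℤ)⟧)
    (hT : Triangle.mk f g h ∈ (distTriang C)) (q : Y ⟶ X) (n : ℤ)
    (hfq : f ≫ q = (n : ℤ) • 𝟙 X) (hqf : q ≫ f = (n : ℤ) • 𝟙 Y) :
    (n ^ 2 : ℤ) • 𝟙 Z = 0 := by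
  -- n • g = 0
  have hfg : f ≫ g = 0 := comp_distTriang_mor_zero₁₂ _ hT
  have hg : (n : ℤ) • g = 0 := by
    have : (q ≫ f) ≫ g = q ≫ (f ≫ g) := by rw [Category.assoc]
    rw [hqf, hfg, comp_zero, Preadditive.zsmul_comp, Category.id_comp] at this
    exact this
  -- n • 𝟙 Z composed with h is zero
  have hh : ((n : ℤ) • 𝟙 Z) ≫ h = 0 := by
    have h1 : h ≫ f⟦(1 : ℤ)⟧' = 0 :=
      comp_distTriang_mor_zero₃₁ _ hT
    have h2 : h ≫ ((n : ℤ) • 𝟙 X)⟦(1 : ℤ)⟧' = 0 := by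
      rw [← hfq, Functor.map_comp, ← Category.assoc, h1, zero_comp]
    rw [CategoryTheory.Functor.map_zsmul, CategoryTheory.Functor.map_id] at h2
    simpa using h2
  obtain ⟨p, hp⟩ := Triangle.coyoneda_exact₃ _ hT ((n : ℤ) • 𝟙 Z) hh
  change Z ⟶ Y at p
  change _ = p ≫ g at hp
  calc (n ^ 2 : ℤ) • 𝟙 Z = (n : ℤ) • ((n : ℤ) • 𝟙 Z) := by rw [smul_smul, pow_two]
    _ = (n : ℤ) • (p ≫ g) := by rw [hp]
    _ = p ≫ ((n : ℤ) • g) := by rw [Preadditive.comp_zsmul]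
    _ = 0 := by rw [hg, comp_zero]

lemma torsion_cone_isogeny {X Y Z : C} (f : X ⟶ Y) (g : Y ⟶ Z) (h : Z ⟶ X⟦(1 : ℤ)⟧)
    (hT : Triangle.mk f g h ∈ (distTriang C)) (n : ℤ) (hn : (n : ℤ) • 𝟙 Z = 0) :
    ∃ q : Y ⟶ X, f ≫ q = (n ^ 2 : ℤ) • 𝟙 X ∧ q ≫ f = (n ^ 2 : ℤ) • 𝟙 Y := by
  -- n • 𝟙 Y composed with g is zero
  have hY : ((n : ℤ) • 𝟙 Y) ≫ g = 0 := by
    have : ((n : ℤ) • 𝟙 Y) ≫ g = g ≫ ((n : ℤ) • 𝟙 Z) := by simp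
    rw [this, hn, comp_zero]
  obtain ⟨q, hq⟩ := Triangle.coyoneda_exact₂ _ hT ((n : ℤ) • 𝟙 Y) hY
  change Y ⟶ X at q
  change _ = q ≫ f at hq
  -- u := f ≫ q - n • 𝟙 X satisfies u ≫ f = 0
  have hu : (f ≫ q - (n : ℤ) • 𝟙 X) ≫ f = 0 := by
    rw [Preadditive.sub_comp, Category.assoc, ← hq]
    simp
  -- factor u through Z⟦-1⟧ via the inverse rotated triangle
  have hT' := inv_rot_of_distTriang _ hT
  obtain ⟨w, hw⟩ := Triangle.coyoneda_exact₂ _ hT' (f ≫ q - (n : ℤ) • 𝟙 X) (by exact hu)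
  change X ⟶ Z⟦(-1 : ℤ)⟧ at w
  -- n • 𝟙 (Z⟦-1⟧) = 0
  have hZ' : (n : ℤ) • 𝟙 (Z⟦(-1 : ℤ)⟧) = 0 := by
    have := (shiftFunctor C (-1 : ℤ)).congr_map hn
    rw [CategoryTheory.Functor.map_zsmul, CategoryTheory.Functor.map_id,
      CategoryTheory.Functor.map_zero] at this
    exact this
  have hnw : (n : ℤ) • w = 0 := by
    have : (n : ℤ) • w = w ≫ ((n : ℤ) • 𝟙 (Z⟦(-1 : ℤ)⟧)) := by simp
    rw [this, hZ', comp_zero]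
  refine ⟨(n : ℤ) • q, ?_, ?_⟩
  · have h1 : (n : ℤ) • (f ≫ q - (n : ℤ) • 𝟙 X) = 0 := by
      rw [hw]
      exact (Preadditive.zsmul_comp w _ n).symm.trans
        ((congrArg (fun x => x ≫ (Triangle.mk f g h).invRotate.mor₁) hnw).trans zero_comp)
    rw [smul_sub, sub_eq_zero] at h1
    calc f ≫ ((n : ℤ) • q) = (n : ℤ) • (f ≫ q) := by rw [Preadditive.comp_zsmul]
      _ = (n : ℤ) • ((n : ℤ) • 𝟙 X) := h1
      _ = (n ^ 2 : ℤ) • 𝟙 X := by rw [smul_smul, pow_two]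
  · calc ((n : ℤ) • q) ≫ f = (n : ℤ) • (q ≫ f) := by rw [Preadditive.zsmul_comp]
      _ = (n : ℤ) • ((n : ℤ) • 𝟙 Y) := by rw [← hq]
      _ = (n ^ 2 : ℤ) • 𝟙 Y := by rw [smul_smul, pow_two]

end Aux

/-- Proposition B.2.1 b) and d): given a distinguished triangle `X →f Y → C → X[1]`,
`f` is an `A`-isogeny iff `C` is `A`-torsion; and the cone of `n • 𝟙 X` is `A`-torsion,
indeed killed by `n²`. -/
theorem stmt_3 (A : Subring ℚ) {C : Type*} [Category C]
    [HasZeroObject C] [Preadditive C] [HasShift C ℤ]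
    [∀ n : ℤ, (CategoryTheory.shiftFunctor C n).Additive] [Pretriangulated C] :
    (∀ (X Y Z : C) (f : X ⟶ Y) (g : Y ⟶ Z) (h : Z ⟶ X⟦(1 : ℤ)⟧),
        Triangle.mk f g h ∈ (distTriang C) → (IsAIsogeny A f ↔ IsATorsion A Z)) ∧
    (∀ (X Z : C) (n : ℤ), n ≠ 0 → IsUnit (n : A) →
        ∀ (g : X ⟶ Z) (h : Z ⟶ X⟦(1 : ℤ)⟧),
        Triangle.mk ((n : ℤ) • 𝟙 X) g h ∈ (distTriang C) →
        IsATorsion A Z ∧ (n ^ 2 : ℤ) • 𝟙 Z = 0) := by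
  have sq_unit : ∀ (n : ℤ), IsUnit (n : A) → IsUnit ((n ^ 2 : ℤ) : A) := by
    intro n hn
    have : ((n ^ 2 : ℤ) : A) = ((n : ℤ) : A) ^ 2 := by push_cast; ring
    rw [this]
    exact hn.pow 2
  constructor
  · intro X Y Z f g h hT
    constructor
    · rintro ⟨q, n, hn0, hnA, hfq, hqf⟩
      exact ⟨n ^ 2, pow_ne_zero _ hn0, sq_unit n hnA,
        isogeny_cone_killed f g h hT q n hfq hqf⟩
    · rintro ⟨n, hn0, hnA, hn⟩
      obtain ⟨q, hq1, hq2⟩ := torsion_cone_isogeny f g h hT n hn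
      exact ⟨q, n ^ 2, pow_ne_zero _ hn0, sq_unit n hnA, hq1, hq2⟩
  · intro X Z n hn0 hnA g h hT
    have key : (n ^ 2 : ℤ) • 𝟙 Z = 0 :=
      isogeny_cone_killed ((n : ℤ) • 𝟙 X) g h hT (𝟙 X) n (by simp) (by simp)
    exact ⟨⟨n ^ 2, pow_ne_zero _ hn0,
      (by
        have : ((n ^ 2 : ℤ) : A) = ((n : ℤ) : A) ^ 2 := by push_cast; ring
        rw [this]; exact hnA.pow 2), key⟩, key⟩
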